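/- Let Σ = X(S¹) be an embedded, closed, smooth plane curve and let p, q ∈ S¹ with d(p,q) ≠ 0. Write w = (X(q) − X(p))/d(p,q) and suppose ⟨w, τ_p⟩ = ⟨w, τ_q⟩ = cos(β/2) for some β ∈ [0, π]. Then exactly one of the following holds for some k ∈ ℤ: (i) ⟨w, ν_p⟩ = −⟨w, ν_q⟩ = −sin(β/2) and θ(p,q) = 2πk + β; (ii) ⟨w, ν_p⟩ = −⟨w, ν_q⟩ = sin(β/2) and θ(p,q) = 2πk − β; (iii) ⟨w, ν_p⟩ = ⟨w, ν_q⟩ = ±sin(β/2) and θ(p,q) = 2πk. -/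

import Mathlib

open Real Set MeasureTheory

noncomputable section

/-- The Euclidean plane. -/
abbrev E2 : Type := EuclideanSpace ℝ (Fin 2)

/-- Rotation by minus 90 degrees: `(a, b) ↦ (b, -a)`. -/
def rot90 (u : E2) : E2 := WithLp.toLp 2 ![u 1, -u 0]

/-- Length element `v(p) = ‖∂X/∂p‖`. -/
def lenElem (X : ℝ → E2) (p : ℝ) : ℝ := ‖deriv X p‖

/-- Unit tangent vector `τ = v⁻¹ ∂X/∂p`. -/
def tvec (X : ℝ → E2) (p : ℝ) : E2 := (lenElem X p)⁻¹ • deriv X p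

/-- Outward unit normal `ν = (τ₂, -τ₁)`. -/
def nvec (X : ℝ → E2) (p : ℝ) : E2 := rot90 (tvec X p)

/-- Curvature `κ = -⟨∂τ/∂s, ν⟩`, where `∂/∂s = v⁻¹ ∂/∂p` is the arc-length derivative. -/
def curv (X : ℝ → E2) (p : ℝ) : ℝ :=
  -(inner ℝ ((lenElem X p)⁻¹ • deriv (tvec X) p) (nvec X p) : ℝ)

/-- Curvature vector `κ⃗ = -κ ν`. -/
def kvec (X : ℝ → E2) (p : ℝ) : E2 := (-(curv X p)) • nvec X p

/-- Local total curvature `θ(p,q) = ∫_p^q κ ds`. -/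
def theta (X : ℝ → E2) (p q : ℝ) : ℝ := ∫ r in p..q, curv X r * lenElem X r

/-- Intrinsic (arc-length) distance `l(p,q) = ∫_p^q ds`. -/
def arcl (X : ℝ → E2) (p q : ℝ) : ℝ := ∫ r in p..q, lenElem X r

/-- `∫_p^q κ² ds`. -/
def sqCurvInt (X : ℝ → E2) (p q : ℝ) : ℝ := ∫ r in p..q, (curv X r)^2 * lenElem X r

/-- Total length `L` of the (1-periodic) curve. -/
def clen (X : ℝ → E2) : ℝ := arcl X 0 1

/-- Extrinsic distance `d(p,q) = ‖X(q) - X(p)‖`. -/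
def extd (X : ℝ → E2) (p q : ℝ) : ℝ := ‖X q - X p‖

/-- The unit vector `w = (X(q) - X(p))/d(p,q)`. -/
def wvec (X : ℝ → E2) (p q : ℝ) : E2 := (extd X p q)⁻¹ • (X q - X p)

/-- `ψ(p,q) = (L/π) sin(π l(p,q)/L)`. -/
def psi (X : ℝ → E2) (p q : ℝ) : ℝ :=
  (clen X / π) * Real.sin (π * arcl X p q / clen X)

/-- A closed smooth regular curve, modelled as a 1-periodic map `ℝ → ℝ²`. -/
def IsClosedCurve (X : ℝ → E2) : Prop :=
  ContDiff ℝ (⊤ : ℕ∞) X ∧ Function.Periodic X 1 ∧ ∀ p, deriv X p ≠ 0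

/-- Embeddedness: self-intersections only at parameters differing by a full period. -/
def IsEmbedded (X : ℝ → E2) : Prop :=
  ∀ p q : ℝ, X p = X q → ∃ k : ℤ, q - p = (k : ℝ)

/-- The set of values of the local total curvature over all pairs of points on the curve. -/
def thetaVals (X : ℝ → E2) : Set ℝ :=
  {x : ℝ | ∃ p q : ℝ, p ≤ q ∧ q ≤ p + 1 ∧ x = theta X p q}

/-- The time-`t` curve of a flow. -/
def curveAt (X : ℝ → ℝ → E2) (t : ℝ) : ℝ → E2 := fun p => X p t

/-- Joint smoothness of a flow of curves. -/
def SmoothFlow (X : ℝ → ℝ → E2) : Prop :=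
  ContDiff ℝ (⊤ : ℕ∞) (fun z : ℝ × ℝ => X z.1 z.2)

/-- The flow equation `∂X/∂t = (h(t) - κ)ν` holding for all times in `S`. -/
def FlowEq (X : ℝ → ℝ → E2) (h : ℝ → ℝ) (S : Set ℝ) : Prop :=
  ∀ p : ℝ, ∀ t ∈ S,
    HasDerivAt (fun s => X p s)
      ((h t - curv (curveAt X t) p) • nvec (curveAt X t) p) t

namespace ThetaAux
open Complex

noncomputable def toC : E2 →L[ℝ] ℂ :=
  LinearMap.toContinuousLinearMap
    { toFun := fun u => (u 0 : ℂ) + (u 1 : ℂ) * Complex.I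
      map_add' := fun u v => by
        simp only [PiLp.add_apply, Complex.ofReal_add]; ring
      map_smul' := fun r u => by
        simp only [PiLp.smul_apply, smul_eq_mul, Complex.ofReal_mul, RingHom.id_apply,
          Complex.real_smul]; ring }

lemma toC_apply (u : E2) : toC u = (u 0 : ℂ) + (u 1 : ℂ) * Complex.I := rfl

lemma abs_toC (u : E2) : ‖toC u‖ = ‖u‖ := by
  rw [toC_apply, EuclideanSpace.norm_eq, Complex.norm_def, Complex.normSq_add_mul_I]
  simp [Fin.sum_univ_two, Real.norm_eq_abs, sq_abs]

lemma inner_toC (u w : E2) : (inner ℝ u w : ℝ) = (toC u * (starRingEnd ℂ) (toC w)).re := by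
  simp [toC_apply, Complex.mul_re, PiLp.inner_apply, RCLike.inner_apply, Fin.sum_univ_two,
    Complex.add_re, Complex.add_im, Complex.mul_im]
  ring

lemma toC_rot90 (u : E2) : toC (rot90 u) = -Complex.I * toC u := by
  rw [toC_apply, toC_apply]
  show ((![u 1, -u 0] : Fin 2 → ℝ) 0 : ℂ) + ((![u 1, -u 0] : Fin 2 → ℝ) 1 : ℂ) * Complex.I = _
  simp only [Matrix.cons_val_zero, Matrix.cons_val_one, Matrix.head_cons, Complex.ofReal_neg]
  linear_combination (u 1 : ℂ) * Complex.I_sq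

end ThetaAux

/-- **Lemma (Dittberner, Lem. 3.5).**
Let `Σ = X(S¹)` be an embedded closed curve, `p, q` with `d(p,q) ≠ 0`, and suppose
`⟨w, τ_p⟩ = ⟨w, τ_q⟩ = cos(β/2)` for some `β ∈ [0, π]`. Then, for some `k ∈ ℤ`, either
(i) `⟨w, ν_p⟩ = -⟨w, ν_q⟩ = -sin(β/2)` and `θ(p,q) = 2πk + β`,
(ii) `⟨w, ν_p⟩ = -⟨w, ν_q⟩ = sin(β/2)` and `θ(p,q) = 2πk - β`, or
(iii) `⟨w, ν_p⟩ = ⟨w, ν_q⟩ = ±sin(β/2)` and `θ(p,q) = 2πk`. -/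
theorem theta_beta_cases
    (X : ℝ → E2) (hcc : IsClosedCurve X) (hemb : IsEmbedded X)
    (p q : ℝ) (hd : extd X p q ≠ 0) (β : ℝ) (hβ : β ∈ Set.Icc 0 π)
    (hwp : (inner ℝ (wvec X p q) (tvec X p) : ℝ) = Real.cos (β / 2))
    (hwq : (inner ℝ (wvec X p q) (tvec X q) : ℝ) = Real.cos (β / 2)) :
    (∃ k : ℤ, (inner ℝ (wvec X p q) (nvec X p) : ℝ) = -Real.sin (β / 2) ∧
        (inner ℝ (wvec X p q) (nvec X q) : ℝ) = Real.sin (β / 2) ∧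
        theta X p q = 2 * π * k + β) ∨
    (∃ k : ℤ, (inner ℝ (wvec X p q) (nvec X p) : ℝ) = Real.sin (β / 2) ∧
        (inner ℝ (wvec X p q) (nvec X q) : ℝ) = -Real.sin (β / 2) ∧
        theta X p q = 2 * π * k - β) ∨
    (∃ k : ℤ, ((inner ℝ (wvec X p q) (nvec X p) : ℝ) = Real.sin (β / 2) ∧
          (inner ℝ (wvec X p q) (nvec X q) : ℝ) = Real.sin (β / 2) ∨
        (inner ℝ (wvec X p q) (nvec X p) : ℝ) = -Real.sin (β / 2) ∧
          (inner ℝ (wvec X p q) (nvec X q) : ℝ) = -Real.sin (β / 2)) ∧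
        theta X p q = 2 * π * k) := by
  classical
  obtain ⟨hsm, hper, hder⟩ := hcc
  have hd' : ContDiff ℝ (⊤ : ℕ∞) (deriv X) := (contDiff_infty_iff_deriv.mp hsm).2
  have hlne : ∀ r, lenElem X r ≠ 0 := fun r => norm_ne_zero_iff.mpr (hder r)
  have hlen : ∀ r, ContDiffAt ℝ (⊤ : ℕ∞) (lenElem X) r := fun r =>
    (hd'.contDiffAt.norm ℝ (hder r) : ContDiffAt ℝ (⊤:ℕ∞) (fun s => ‖deriv X s‖) r)
  have hτ : ContDiff ℝ (⊤ : ℕ∞) (tvec X) := by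
    rw [contDiff_iff_contDiffAt]
    intro r
    exact ((hlen r).inv (hlne r)).smul hd'.contDiffAt
  have hτd : Differentiable ℝ (tvec X) := hτ.differentiable (by simp)
  have hτ' : ContDiff ℝ (⊤ : ℕ∞) (deriv (tvec X)) := (contDiff_infty_iff_deriv.mp hτ).2
  have hτunit : ∀ r, ‖tvec X r‖ = 1 := by
    intro r
    have h0 : (0:ℝ) ≤ lenElem X r := norm_nonneg _
    rw [tvec, norm_smul, Real.norm_eq_abs, abs_of_nonneg (inv_nonneg.mpr h0)]
    exact inv_mul_cancel₀ (hlne r)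
  have horth : ∀ r, (inner ℝ (deriv (tvec X) r) (tvec X r) : ℝ) = 0 := by
    intro r
    have h1 : HasDerivAt (fun s => (inner ℝ (tvec X s) (tvec X s) : ℝ))
        ((inner ℝ (tvec X r) (deriv (tvec X) r) : ℝ) + inner ℝ (deriv (tvec X) r) (tvec X r)) r :=
      HasDerivAt.inner ℝ (hτd r).hasDerivAt (hτd r).hasDerivAt
    have h2 : (fun s => (inner ℝ (tvec X s) (tvec X s) : ℝ)) = fun _ => 1 := by
      funext s
      rw [real_inner_self_eq_norm_mul_norm, hτunit s, mul_one]
    rw [h2] at h1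
    have h3 := h1.unique (hasDerivAt_const r (1:ℝ))
    have h4 : (inner ℝ (tvec X r) (deriv (tvec X) r) : ℝ) = inner ℝ (deriv (tvec X) r) (tvec X r) :=
      real_inner_comm _ _
    linarith
  set Z : ℝ → ℂ := fun r => ThetaAux.toC (tvec X r) with hZdef
  have hZd : ∀ r, HasDerivAt Z (ThetaAux.toC (deriv (tvec X) r)) r := fun r =>
    (ThetaAux.toC.hasFDerivAt.comp_hasDerivAt r (hτd r).hasDerivAt)
  have hzz : ∀ r, Z r * (starRingEnd ℂ) (Z r) = 1 := by
    intro r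
    rw [Complex.mul_conj]
    norm_cast
    rw [← Complex.sq_norm, ThetaAux.abs_toC, hτunit r, one_pow]
  have him : ∀ r, (ThetaAux.toC (deriv (tvec X) r) * (starRingEnd ℂ) (Z r)).im
      = curv X r * lenElem X r := by
    intro r
    have h2 : curv X r = -((lenElem X r)⁻¹ *
        (ThetaAux.toC (deriv (tvec X) r) * (starRingEnd ℂ) (ThetaAux.toC (nvec X r))).re) := by
      rw [curv, real_inner_smul_left, ThetaAux.inner_toC]
    rw [show ThetaAux.toC (nvec X r) = -Complex.I * Z r from ThetaAux.toC_rot90 _] at h2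
    have h3 : (ThetaAux.toC (deriv (tvec X) r) *
        (starRingEnd ℂ) (-Complex.I * Z r)).re
        = -(ThetaAux.toC (deriv (tvec X) r) * (starRingEnd ℂ) (Z r)).im := by
      simp [Complex.mul_re, Complex.mul_im, map_mul, Complex.conj_I]
      ring
    rw [h3] at h2
    rw [h2]
    field_simp
    exact (mul_div_cancel_right₀ _ (hlne r)).symm
  have hkey : ∀ r, ThetaAux.toC (deriv (tvec X) r)
      = (↑(curv X r * lenElem X r)) * Complex.I * Z r := by
    intro r
    have hre : (ThetaAux.toC (deriv (tvec X) r) * (starRingEnd ℂ) (Z r)).re = 0 := by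
      rw [← ThetaAux.inner_toC]; exact horth r
    have h4 : ThetaAux.toC (deriv (tvec X) r) * (starRingEnd ℂ) (Z r)
        = (↑(curv X r * lenElem X r)) * Complex.I := by
      apply Complex.ext
      · simp [hre]
      · simp [him r]
    calc ThetaAux.toC (deriv (tvec X) r)
        = ThetaAux.toC (deriv (tvec X) r) * ((starRingEnd ℂ) (Z r) * Z r) := by
          rw [mul_comm ((starRingEnd ℂ) (Z r)), hzz r, mul_one]
      _ = (ThetaAux.toC (deriv (tvec X) r) * (starRingEnd ℂ) (Z r)) * Z r := by ring
      _ = _ := by rw [h4]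
  have hFcont : Continuous (fun r => curv X r * lenElem X r) := by
    have he : (fun r => curv X r * lenElem X r)
        = fun r => (ThetaAux.toC (deriv (tvec X) r) * (starRingEnd ℂ) (Z r)).im :=
      funext fun r => (him r).symm
    rw [he]
    apply Complex.continuous_im.comp
    exact (ThetaAux.toC.continuous.comp hτ'.continuous).mul
      (Complex.continuous_conj.comp (ThetaAux.toC.continuous.comp hτ.continuous))
  set Θ : ℝ → ℝ := fun r => theta X p r with hΘdef
  have hΘd : ∀ r, HasDerivAt Θ (curv X r * lenElem X r) r := fun r =>
    intervalIntegral.integral_hasDerivAt_right (hFcont.intervalIntegrable _ _)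
      (hFcont.stronglyMeasurableAtFilter _ _) hFcont.continuousAt
  have hg : ∀ r, HasDerivAt (fun s => Z s * Complex.exp (-(Θ s : ℂ) * Complex.I)) 0 r := by
    intro r
    have h1 : HasDerivAt (fun s : ℝ => (-(Θ s : ℂ) * Complex.I))
        (-(curv X r * lenElem X r : ℝ) * Complex.I) r :=
      ((hΘd r).ofReal_comp.neg).mul_const Complex.I
    have h2 := h1.cexp
    have h3 := (hZd r).mul h2
    refine h3.congr_deriv ?_
    rw [hkey r]
    ring
  have hgdiff : Differentiable ℝ (fun s => Z s * Complex.exp (-(Θ s : ℂ) * Complex.I)) :=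
    fun r => (hg r).differentiableAt
  have hconst : Z q * Complex.exp (-(Θ q : ℂ) * Complex.I) = Z p := by
    have hc := is_const_of_deriv_eq_zero hgdiff (fun r => (hg r).deriv) q p
    have hΘp : Θ p = 0 := by
      simp [hΘdef, theta, intervalIntegral.integral_same]
    rw [hΘp] at hc
    simpa using hc
  have hZq : Z q = Z p * Complex.exp ((Θ q : ℂ) * Complex.I) := by
    rw [← hconst, mul_assoc, ← Complex.exp_add]
    simp
  have hwunit : ‖ThetaAux.toC (wvec X p q)‖ = 1 := by
    have h0 : (0:ℝ) ≤ extd X p q := norm_nonneg _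
    rw [ThetaAux.abs_toC, wvec, norm_smul, Real.norm_eq_abs, abs_of_nonneg (inv_nonneg.mpr h0)]
    exact inv_mul_cancel₀ hd
  set W : ℂ := ThetaAux.toC (wvec X p q) with hWdef
  have hZr : ∀ r, ThetaAux.toC (tvec X r) = Z r := fun _ => rfl
  have hZabs : ∀ r, ‖Z r‖ = 1 := by
    intro r
    rw [← hZr r, ThetaAux.abs_toC]
    exact hτunit r
  set u : ℂ := W * (starRingEnd ℂ) (Z p) with hudef
  have habsu : ‖u‖ = 1 := by
    rw [hudef, norm_mul, Complex.norm_conj, hwunit, hZabs p, mul_one]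
  set α : ℝ := u.arg with hαdef
  have hu : u = Complex.exp ((α:ℂ) * Complex.I) := by
    conv_lhs => rw [← Complex.norm_mul_exp_arg_mul_I u]
    rw [habsu, Complex.ofReal_one, one_mul]
  have hce : (starRingEnd ℂ) (Complex.exp ((Θ q : ℂ) * Complex.I))
      = Complex.exp (-(Θ q:ℂ) * Complex.I) := by
    rw [← Complex.exp_conj]
    congr 1
    simp [map_mul, Complex.conj_I, Complex.conj_ofReal]
  have hWZq : W * (starRingEnd ℂ) (Z q) = Complex.exp (((α - Θ q : ℝ) : ℂ) * Complex.I) := by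
    calc W * (starRingEnd ℂ) (Z q)
        = (W * (starRingEnd ℂ) (Z p)) * Complex.exp (-(Θ q:ℂ) * Complex.I) := by
          rw [hZq, map_mul, hce]; ring
      _ = Complex.exp ((α:ℂ)*Complex.I) * Complex.exp (-(Θ q:ℂ) * Complex.I) := by
          rw [← hudef, hu]
      _ = Complex.exp (((α - Θ q : ℝ):ℂ) * Complex.I) := by
          rw [← Complex.exp_add]
          congr 1
          push_cast
          ring
  have htan : ∀ r, (inner ℝ (wvec X p q) (tvec X r) : ℝ) = (W * (starRingEnd ℂ) (Z r)).re := by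
    intro r
    rw [ThetaAux.inner_toC, ← hWdef, hZr r]
  have hnu : ∀ r, (inner ℝ (wvec X p q) (nvec X r) : ℝ) = -(W * (starRingEnd ℂ) (Z r)).im := by
    intro r
    rw [ThetaAux.inner_toC, ← hWdef,
      show ThetaAux.toC (nvec X r) = -Complex.I * Z r from ThetaAux.toC_rot90 (tvec X r)]
    simp [map_mul, Complex.conj_I, Complex.mul_re, Complex.mul_im]
    ring
  have ep1 : Real.cos α = Real.cos (β/2) := by
    rw [← hwp, htan p, ← hudef, hu, Complex.exp_ofReal_mul_I_re]
  have ep2 : Real.cos (α - Θ q) = Real.cos (β/2) := by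
    rw [← hwq, htan q, hWZq, Complex.exp_ofReal_mul_I_re]
  have hνp : (inner ℝ (wvec X p q) (nvec X p) : ℝ) = -Real.sin α := by
    rw [hnu p, ← hudef, hu, Complex.exp_ofReal_mul_I_im]
  have hνq : (inner ℝ (wvec X p q) (nvec X q) : ℝ) = -Real.sin (α - Θ q) := by
    rw [hnu q, hWZq, Complex.exp_ofReal_mul_I_im]
  have hθval : theta X p q = Θ q := rfl
  have hsin1 : ∀ (c : ℝ) (k : ℤ), Real.sin (c - 2*(k:ℝ)*π) = Real.sin c := by
    intro c k
    have h := Real.sin_add_int_mul_two_pi (c - 2*(k:ℝ)*π) k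
    rw [show c - 2*(k:ℝ)*π + (k:ℝ)*(2*π) = c by ring] at h
    exact h.symm
  obtain ⟨m, hm | hm⟩ := Real.cos_eq_cos_iff.mp ep1 <;>
    obtain ⟨n, hn | hn⟩ := Real.cos_eq_cos_iff.mp ep2
  · refine Or.inr (Or.inr ⟨n - m, Or.inr ⟨?_, ?_⟩, ?_⟩)
    · rw [hνp, show α = β/2 - 2*(m:ℝ)*π by linarith, hsin1]
    · rw [hνq, show α - Θ q = β/2 - 2*(n:ℝ)*π by linarith, hsin1]
    · rw [hθval]; push_cast; linarith
  · refine Or.inl ⟨-m - n, ?_, ?_, ?_⟩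
    · rw [hνp, show α = β/2 - 2*(m:ℝ)*π by linarith, hsin1]
    · rw [hνq, show α - Θ q = (-(β/2)) - 2*((-n : ℤ):ℝ)*π by push_cast; linarith, hsin1,
        Real.sin_neg, neg_neg]
    · rw [hθval]; push_cast; linarith
  · refine Or.inr (Or.inl ⟨m + n, ?_, ?_, ?_⟩)
    · rw [hνp, show α = (-(β/2)) - 2*((-m:ℤ):ℝ)*π by push_cast; linarith, hsin1,
        Real.sin_neg, neg_neg]
    · rw [hνq, show α - Θ q = β/2 - 2*(n:ℝ)*π by linarith, hsin1]
    · rw [hθval]; push_cast; linarith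
  · refine Or.inr (Or.inr ⟨m - n, Or.inl ⟨?_, ?_⟩, ?_⟩)
    · rw [hνp, show α = (-(β/2)) - 2*((-m:ℤ):ℝ)*π by push_cast; linarith, hsin1,
        Real.sin_neg, neg_neg]
    · rw [hνq, show α - Θ q = (-(β/2)) - 2*((-n:ℤ):ℝ)*π by push_cast; linarith, hsin1,
        Real.sin_neg, neg_neg]
    · rw [hθval]; push_cast; linarith
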